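/- arXiv:2301.06662 — 2 statements merged into one kernel-verified Lean document; each statement's English description precedes it below -/
import Mathlib

section
/- For any real p×(I+1) matrix W supported on a subspace M (i.e., W[ij]=0 outside the support set of cardinality s), the regularizer R(W) = ||w_con||_1 + ν·∑_{i=1}^I ||w_i − w_con||_2 satisfies R(W) ≤ (√s + ν·√(I·p·ω_max(L_m)))·||W||_F, where w_1,...,w_I,w_con are the columns of W, ω_max(L_m) is the largest eigenvalue of the (I+1)×(I+1) matrix L_m having 1's on the first I diagonal entries, I in the last diagonal entry, −1 in the last row and column off-diagonal, and 0 elsewhere. -/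
open Finset

lemma sum_le_sqrt_card_mul {ι : Type*} (s : Finset ι) (f : ι → ℝ)
    (hf : ∀ i ∈ s, 0 ≤ f i) :
    ∑ i ∈ s, f i ≤ Real.sqrt s.card * Real.sqrt (∑ i ∈ s, f i ^ 2) := by
  have h0 : 0 ≤ ∑ i ∈ s, f i := Finset.sum_nonneg hf
  calc ∑ i ∈ s, f i = Real.sqrt ((∑ i ∈ s, f i) ^ 2) := (Real.sqrt_sq h0).symm
    _ ≤ Real.sqrt ((s.card : ℝ) * ∑ i ∈ s, f i ^ 2) := by
        apply Real.sqrt_le_sqrt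
        exact_mod_cast sq_sum_le_card_mul_sum_sq (s := s) (f := f)
    _ = Real.sqrt s.card * Real.sqrt (∑ i ∈ s, f i ^ 2) := by
        rw [Real.sqrt_mul (by positivity)]


lemma quadform (I : ℕ) (Lm : Matrix (Fin (I + 1)) (Fin (I + 1)) ℝ)
    (hLm : ∀ i j : Fin (I + 1), Lm i j =
      if i = Fin.last I ∧ j = Fin.last I then (I : ℝ)
      else if i = j then 1
      else if i = Fin.last I ∨ j = Fin.last I then -1 else 0)
    (v : Fin (I + 1) → ℝ) :
    ∑ a, ∑ b, v a * Lm a b * v b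
      = ∑ i : Fin I, (v i.castSucc - v (Fin.last I)) ^ 2 := by
  have hne : ∀ i : Fin I, i.castSucc ≠ Fin.last I :=
    fun i => (Fin.castSucc_lt_last i).ne
  simp only [hLm]
  rw [Fin.sum_univ_castSucc]
  have h1 : ∀ i : Fin I,
      (∑ b, v i.castSucc *
        (if i.castSucc = Fin.last I ∧ b = Fin.last I then (I : ℝ)
         else if i.castSucc = b then 1
         else if i.castSucc = Fin.last I ∨ b = Fin.last I then -1 else 0) * v b)
      = v i.castSucc ^ 2 - v i.castSucc * v (Fin.last I) := by
    intro i
    rw [Fin.sum_univ_castSucc]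
    simp [hne, Fin.castSucc_inj, Finset.sum_ite_eq, mul_ite, ite_mul]
    ring
  have h2 :
      (∑ b, v (Fin.last I) *
        (if Fin.last I = Fin.last I ∧ b = Fin.last I then (I : ℝ)
         else if Fin.last I = b then 1
         else if Fin.last I = Fin.last I ∨ b = Fin.last I then -1 else 0) * v b)
      = (I : ℝ) * v (Fin.last I) ^ 2 - ∑ i : Fin I, v (Fin.last I) * v i.castSucc := by
    rw [Fin.sum_univ_castSucc]
    simp [hne, fun i => (hne i).symm, Finset.sum_neg_distrib]
    ring
  rw [Finset.sum_congr rfl (fun i _ => h1 i), h2]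
  simp [sub_sq, Finset.sum_add_distrib, Finset.sum_sub_distrib, Finset.mul_sum,
    Finset.sum_const, card_univ, mul_comm]
  have h3 : ∑ x : Fin I, v (Fin.last I) * (v x.castSucc * 2)
      = ∑ x : Fin I, v x.castSucc * v (Fin.last I) +
        ∑ x : Fin I, v x.castSucc * v (Fin.last I) := by
    rw [← Finset.sum_add_distrib]; exact Finset.sum_congr rfl (fun x _ => by ring)
  rw [h3]; ring

/-- bound on the regularizer R(W) = ‖w_con‖₁ + ν ∑ᵢ ‖wᵢ − w_con‖₂
for a matrix W with s nonzero entries, in terms of √s + ν√(I p ω_max(L_m)) times ‖W‖_F. -/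
theorem regularizer_bound (p I : ℕ) (ν : ℝ) (hν : 0 < ν)
    (W : Matrix (Fin p) (Fin (I + 1)) ℝ)
    (s : ℕ)
    (hs : s = (Finset.univ.filter
      (fun q : Fin p × Fin (I + 1) => W q.1 q.2 ≠ 0)).card)
    (Lm : Matrix (Fin (I + 1)) (Fin (I + 1)) ℝ)
    (hLm : ∀ i j : Fin (I + 1), Lm i j =
      if i = Fin.last I ∧ j = Fin.last I then (I : ℝ)
      else if i = j then 1
      else if i = Fin.last I ∨ j = Fin.last I then -1 else 0)
    (ωmax : ℝ)
    -- ω_max(L_m) is the largest eigenvalue of L_m, i.e. it bounds the Rayleigh quotient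
    (hω : ∀ v : Fin (I + 1) → ℝ,
      (∑ i, ∑ j, v i * Lm i j * v j) ≤ ωmax * ∑ i, (v i) ^ 2) :
    (∑ j, |W j (Fin.last I)|) +
      ν * ∑ i : Fin I,
        Real.sqrt (∑ j, (W j i.castSucc - W j (Fin.last I)) ^ 2)
    ≤ (Real.sqrt s + ν * Real.sqrt ((I : ℝ) * p * ωmax)) *
        Real.sqrt (∑ j, ∑ i, (W j i) ^ 2) := by
  -- trivial case p = 0
  rcases Nat.eq_zero_or_pos p with hp | hp
  · subst hp
    simp
  -- ωmax is nonnegative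
  have hω0 : 0 ≤ ωmax := by
    have h := hω (Pi.single (Fin.last I) 1)
    simp only [Pi.single_apply, ite_mul, one_mul, zero_mul, mul_ite, mul_one, mul_zero,
      Finset.sum_ite_eq', Finset.mem_univ, if_true, Finset.sum_ite_eq] at h
    rw [hLm] at h
    simp at h
    nlinarith [Nat.cast_nonneg (α := ℝ) I]
  set S : ℝ := ∑ j, ∑ i, (W j i) ^ 2 with hSdef
  have hSnn : 0 ≤ S := by positivity
  -- Part 1 : ℓ¹ of last column
  have part1 : (∑ j, |W j (Fin.last I)|) ≤ Real.sqrt s * Real.sqrt S := by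
    set T : Finset (Fin p) := Finset.univ.filter (fun j => W j (Fin.last I) ≠ 0) with hT
    have hsum1 : ∑ j, |W j (Fin.last I)| = ∑ j ∈ T, |W j (Fin.last I)| := by
      rw [hT]
      exact (Finset.sum_filter_of_ne (fun j _ h => by
        intro hc; exact h (by rw [hc, abs_zero]))).symm
    have hcard : (T.card : ℝ) ≤ (s : ℝ) := by
      have : T.card ≤ s := by
        rw [hs]
        apply Finset.card_le_card_of_injOn (fun j => (j, Fin.last I))
        · intro j hj
          simp only [hT, Finset.mem_coe, Finset.mem_filter, Finset.mem_univ, true_and] at hj ⊢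
          exact hj
        · intro a _ b _ h
          exact congrArg Prod.fst h
      exact_mod_cast this
    have hsq : ∑ j ∈ T, |W j (Fin.last I)| ^ 2 ≤ S := by
      calc ∑ j ∈ T, |W j (Fin.last I)| ^ 2 = ∑ j ∈ T, (W j (Fin.last I)) ^ 2 := by
            simp [sq_abs]
        _ ≤ ∑ j, (W j (Fin.last I)) ^ 2 :=
            Finset.sum_le_sum_of_subset_of_nonneg (Finset.subset_univ T)
              (fun j _ _ => by positivity)
        _ ≤ S := Finset.sum_le_sum (fun j _ =>
            Finset.single_le_sum (f := fun i => (W j i) ^ 2)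
              (fun i _ => by positivity) (Finset.mem_univ _))
    rw [hsum1]
    calc ∑ j ∈ T, |W j (Fin.last I)|
        ≤ Real.sqrt T.card * Real.sqrt (∑ j ∈ T, |W j (Fin.last I)| ^ 2) :=
          sum_le_sqrt_card_mul T _ (fun j _ => abs_nonneg _)
      _ ≤ Real.sqrt s * Real.sqrt S := by
          exact mul_le_mul (Real.sqrt_le_sqrt hcard) (Real.sqrt_le_sqrt hsq)
            (Real.sqrt_nonneg _) (Real.sqrt_nonneg _)
  -- Part 2 : sum of ℓ² norms of differences
  set q : Fin I → ℝ := fun i => ∑ j, (W j i.castSucc - W j (Fin.last I)) ^ 2 with hq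
  have hqnn : ∀ i, 0 ≤ q i := fun i => by positivity
  have hqsum : ∑ i : Fin I, q i ≤ ωmax * S := by
    have hrow : ∀ j : Fin p, ∑ i : Fin I, (W j i.castSucc - W j (Fin.last I)) ^ 2
        ≤ ωmax * ∑ i, (W j i) ^ 2 := by
      intro j
      rw [← quadform I Lm hLm (W j)]
      exact hω (W j)
    calc ∑ i : Fin I, q i = ∑ j, ∑ i : Fin I, (W j i.castSucc - W j (Fin.last I)) ^ 2 :=
          Finset.sum_comm
      _ ≤ ∑ j, ωmax * ∑ i, (W j i) ^ 2 := Finset.sum_le_sum (fun j _ => hrow j)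
      _ = ωmax * S := by rw [hSdef, Finset.mul_sum]
  have part2 : ∑ i : Fin I, Real.sqrt (q i)
      ≤ Real.sqrt ((I : ℝ) * p * ωmax) * Real.sqrt S := by
    calc ∑ i : Fin I, Real.sqrt (q i)
        ≤ Real.sqrt ((univ : Finset (Fin I)).card) *
            Real.sqrt (∑ i, Real.sqrt (q i) ^ 2) :=
          sum_le_sqrt_card_mul _ _ (fun i _ => Real.sqrt_nonneg _)
      _ = Real.sqrt I * Real.sqrt (∑ i, q i) := by
          simp [Real.sq_sqrt (hqnn _)]
      _ ≤ Real.sqrt I * Real.sqrt (ωmax * S) := by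
          gcongr
      _ = Real.sqrt ((I : ℝ) * ωmax) * Real.sqrt S := by
          rw [Real.sqrt_mul hω0, Real.sqrt_mul (by positivity), mul_assoc]
      _ ≤ Real.sqrt ((I : ℝ) * p * ωmax) * Real.sqrt S := by
          gcongr
          exact le_mul_of_one_le_right (Nat.cast_nonneg I) (by exact_mod_cast hp)
  calc (∑ j, |W j (Fin.last I)|) + ν * ∑ i : Fin I, Real.sqrt (q i)
      ≤ Real.sqrt s * Real.sqrt S +
        ν * (Real.sqrt ((I : ℝ) * p * ωmax) * Real.sqrt S) := by
        gcongr
    _ = (Real.sqrt s + ν * Real.sqrt ((I : ℝ) * p * ωmax)) * Real.sqrt S := by ring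
end

section
/- Let R and R* be a norm and its dual norm on ℝ^{p×(I+1)} with respect to the trace inner product, and suppose R is decomposable with respect to orthogonal subspaces (M, M^⊥). Let G be a differentiable function satisfying the curvature bound G(W*+Δ) − G(W*) − ⟨∇G(W*), Δ⟩ ≥ 2β||Δ||_F² for all Δ, and suppose R*(∇G(W*)) ≤ λ/2 with λ > 0. Then for any Δ, the function φ(Δ) = G(W*+Δ) − G(W*) + λ(R(W*+Δ) − R(W*)) satisfies φ(Δ) ≥ −(3λ/2)·R(Δ_M) + 2β·||Δ||_F², provided W* ∈ M so that R(W*+Δ) − R(W*) ≥ R(Δ_{M^⊥}) − R(Δ_M). -/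
open Finset RealInnerProductSpace

/-- lower bound on φ(Δ) = G(W*+Δ) − G(W*) + λ(R(W*+Δ) − R(W*))
for a decomposable norm R with dual norm R*, curvature 2β and R*(∇G(W*)) ≤ λ/2:
φ(Δ) ≥ −(3λ/2)R(Δ_M) + 2β‖Δ‖_F². -/
theorem phi_lower_bound (p I : ℕ)
    (R Rstar : EuclideanSpace ℝ (Fin p × Fin (I + 1)) → ℝ)
    -- R is a norm
    (hR_add : ∀ x y, R (x + y) ≤ R x + R y)
    (hR_smul : ∀ (c : ℝ) x, R (c • x) = |c| * R x)
    (hR_nonneg : ∀ x, 0 ≤ R x)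
    -- R* is the dual norm: generalized Cauchy–Schwarz
    (hdual : ∀ Y X, |⟪Y, X⟫| ≤ Rstar Y * R X)
    (M : Submodule ℝ (EuclideanSpace ℝ (Fin p × Fin (I + 1))))
    -- decomposability with respect to (M, Mᗮ)
    (hdecomp : ∀ W₁ ∈ M, ∀ W₂ ∈ Mᗮ, R (W₁ + W₂) = R W₁ + R W₂)
    (G : EuclideanSpace ℝ (Fin p × Fin (I + 1)) → ℝ)
    (GW : EuclideanSpace ℝ (Fin p × Fin (I + 1)))  -- GW = ∇G(W*)
    (β lam : ℝ) (hβ : 0 < β) (hlam : 0 < lam)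
    (Wstar : EuclideanSpace ℝ (Fin p × Fin (I + 1))) (hWstar : Wstar ∈ M)
    -- curvature bound for G at W*
    (hcurv : ∀ Δ, 2 * β * ‖Δ‖ ^ 2 ≤ G (Wstar + Δ) - G Wstar - ⟪GW, Δ⟫)
    (hRstar : Rstar GW ≤ lam / 2) :
    ∀ Δ : EuclideanSpace ℝ (Fin p × Fin (I + 1)),
      -(3 * lam / 2) *
          R ((M.orthogonalProjectionOnto Δ : EuclideanSpace ℝ (Fin p × Fin (I + 1))))
        + 2 * β * ‖Δ‖ ^ 2
      ≤ G (Wstar + Δ) - G Wstar + lam * (R (Wstar + Δ) - R Wstar) := by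
  intro Δ
  set a : EuclideanSpace ℝ (Fin p × Fin (I + 1)) := ↑(M.orthogonalProjectionOnto Δ) with ha
  set b : EuclideanSpace ℝ (Fin p × Fin (I + 1)) := Δ - a with hb
  have hamem : a ∈ M := (M.orthogonalProjectionOnto Δ).2
  have hbmem : b ∈ Mᗮ := Submodule.sub_starProjection_mem_orthogonal (K := M) Δ
  have hab : Δ = a + b := by rw [hb]; abel
  have hRneg : ∀ x, R (-x) = R x := by
    intro x; simpa using hR_smul (-1) x
  have h1 : R b - R a ≤ R (Wstar + Δ) - R Wstar := by
    have hdW : R (Wstar + a + b) = R (Wstar + a) + R b :=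
      hdecomp _ (M.add_mem hWstar hamem) _ hbmem
    have htri : R Wstar ≤ R (Wstar + a) + R a := by
      have := hR_add (Wstar + a) (-a)
      simpa [hRneg, add_assoc] using this
    have heq : Wstar + Δ = Wstar + a + b := by rw [hab]; abel
    rw [heq, hdW]; linarith
  have hRΔ : R Δ ≤ R a + R b := by rw [hab]; exact hR_add a b
  have hCS : |⟪GW, Δ⟫| ≤ lam / 2 * (R a + R b) := by
    calc |⟪GW, Δ⟫| ≤ Rstar GW * R Δ := hdual _ _
      _ ≤ lam / 2 * (R a + R b) :=
        mul_le_mul hRstar hRΔ (hR_nonneg Δ) (le_of_lt (half_pos hlam))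
  have h2 := hcurv Δ
  have h3 := neg_abs_le (⟪GW, Δ⟫ : ℝ)
  have hRb := hR_nonneg b
  nlinarith [mul_le_mul_of_nonneg_left h1 hlam.le]
end
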